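/- arXiv:2306.02226 — 2 statements merged into one kernel-verified Lean document; each statement's English description precedes it below -/
import Mathlib

section
/- For all a, b > 0, the function ξ ↦ α*₁(a,b,ξ) is convex on ℝ; more precisely, it is twice differentiable and its second derivative at every ξ ∈ ℝ satisfies min{a,b} ≤ ∂²_ξ α*₁(a,b,ξ) ≤ max{a,b}. -/
open Real

/-- The logarithmic mean `Λ(s,t)`. -/
noncomputable def logMean (s t : ℝ) : ℝ :=
  if s = t then s else (s - t) / (Real.log s - Real.log t)

/-- The harmonic-logarithmic mean `Λ_H(s,t) = st/Λ(s,t)`. -/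
noncomputable def harmLogMean (s t : ℝ) : ℝ := s * t / logMean s t

/-- `α*₁(a,b,ξ) = ∫₀^ξ sinh(x) Λ_H(a e^{-x}, b e^{x}) dx`. -/
noncomputable def alphaOne (a b ξ : ℝ) : ℝ :=
  ∫ x in (0:ℝ)..ξ, Real.sinh x * harmLogMean (a * Real.exp (-x)) (b * Real.exp x)

/-- `u ↦ u * coth u`, extended by `1` at `0`. -/
noncomputable def cothAux (u : ℝ) : ℝ :=
  if u = 0 then 1 else u * Real.cosh u / Real.sinh u

/-- The derivative of `cothAux`. -/
noncomputable def cothAux' (u : ℝ) : ℝ :=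
  if u = 0 then 0 else (Real.sinh u * Real.cosh u - u) / (Real.sinh u) ^ 2

lemma cothAux_even (u : ℝ) : cothAux (-u) = cothAux u := by
  unfold cothAux
  by_cases h : u = 0
  · simp [h]
  · rw [if_neg (by simpa using h), if_neg h, Real.cosh_neg, Real.sinh_neg]
    field_simp

lemma cothAux'_nonneg_le_one {u : ℝ} (hu : 0 ≤ u) : 0 ≤ cothAux' u ∧ cothAux' u ≤ 1 := by
  rcases eq_or_lt_of_le hu with h | h
  · simp [cothAux', ← h]
  have hs : 0 < Real.sinh u := Real.sinh_pos_iff.mpr h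
  have hs2 : (0:ℝ) < Real.sinh u ^ 2 := by positivity
  rw [cothAux', if_neg h.ne']
  constructor
  · apply div_nonneg _ hs2.le
    have h1 : 2 * u ≤ Real.sinh (2 * u) := Real.self_le_sinh_iff.mpr (by linarith)
    rw [Real.sinh_two_mul] at h1
    linarith
  · rw [div_le_one hs2]
    have hE : Real.cosh u - Real.sinh u = Real.exp (-u) := Real.cosh_sub_sinh u
    have h1 : Real.exp u * Real.exp (-u) = 1 := by rw [← Real.exp_add]; simp
    have h2 : (-2*u) + 1 ≤ Real.exp (-2*u) := Real.add_one_le_exp _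
    have h3 : Real.exp (-2*u) = Real.exp (-u) * Real.exp (-u) := by
      rw [← Real.exp_add]; ring_nf
    have h4 : Real.sinh u = (Real.exp u - Real.exp (-u)) / 2 := Real.sinh_eq u
    nlinarith [Real.exp_pos (-u)]

lemma cothAux'_odd (v : ℝ) : cothAux' (-v) = -cothAux' v := by
  unfold cothAux'
  by_cases h : v = 0
  · simp [h]
  · rw [if_neg (by simpa using h), if_neg h, Real.cosh_neg, Real.sinh_neg]
    field_simp
    ring

lemma abs_cothAux'_le_one (u : ℝ) : |cothAux' u| ≤ 1 := by
  rcases le_total 0 u with h | h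
  · have := cothAux'_nonneg_le_one h
    rw [abs_of_nonneg this.1]; exact this.2
  · have := cothAux'_nonneg_le_one (neg_nonneg.mpr h)
    rw [← abs_neg, ← cothAux'_odd u, abs_of_nonneg this.1]; exact this.2

lemma key_slope_bound {u : ℝ} (h0 : 0 < u) (h2 : u ≤ 1/2) :
    0 ≤ u * Real.cosh u - Real.sinh u ∧
    u * Real.cosh u - Real.sinh u ≤ u * (u * Real.sinh u) := by
  have hE : (0:ℝ) < Real.exp u := Real.exp_pos u
  have h1 : Real.exp u * Real.exp (-u) = 1 := by rw [← Real.exp_add]; simp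
  have hy2 : Real.exp (2*u) ≤ 1 + 2*u + 2*u^2 + (16/9) * u^3 := by
    have := Real.exp_bound' (by linarith : (0:ℝ) ≤ 2*u) (by linarith : 2*u ≤ 1)
      (by norm_num : 0 < 3)
    calc Real.exp (2*u) ≤ (∑ m ∈ Finset.range 3, (2*u) ^ m / m.factorial)
          + (2*u) ^ 3 * (3 + 1) / (Nat.factorial 3 * 3) := this
      _ = 1 + 2*u + 2*u^2 + (16/9) * u^3 := by
          simp [Finset.sum_range_succ, Nat.factorial]; ring
  have hy1 : 1 + 2*u + 2*u^2 ≤ Real.exp (2*u) := by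
    have := Real.quadratic_le_exp_of_nonneg (by linarith : (0:ℝ) ≤ 2*u)
    nlinarith
  have hyE : Real.exp (2*u) = Real.exp u * Real.exp u := by rw [← Real.exp_add]; ring_nf
  have hsinh : Real.sinh u = (Real.exp u - Real.exp (-u)) / 2 := Real.sinh_eq u
  have hcosh : Real.cosh u = (Real.exp u + Real.exp (-u)) / 2 := Real.cosh_eq u
  constructor
  · have hid : 2 * Real.exp u * (u * Real.cosh u - Real.sinh u)
        = u * (Real.exp (2*u) + 1) - (Real.exp (2*u) - 1) := by
      rw [hsinh, hcosh, hyE]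
      linear_combination (u + 1) * h1
    nlinarith [hy2, hE]
  · have hid : 2 * Real.exp u * (u * (u * Real.sinh u) - (u * Real.cosh u - Real.sinh u))
        = u^2 * (Real.exp (2*u) - 1) + (Real.exp (2*u) - 1) - u * (Real.exp (2*u) + 1) := by
      rw [hsinh, hcosh, hyE]
      linear_combination (-(u^2 + u + 1)) * h1
    nlinarith [hy1, hE]

lemma hasDerivAt_cothAux (u : ℝ) : HasDerivAt cothAux (cothAux' u) u := by
  by_cases hu : u = 0
  · subst hu
    rw [show cothAux' 0 = 0 by simp [cothAux']]
    rw [hasDerivAt_iff_tendsto_slope]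
    refine squeeze_zero_norm' (a := fun v : ℝ => |v|) ?_ ?_
    · have h1 : ∀ᶠ v in nhdsWithin (0:ℝ) {(0:ℝ)}ᶜ, v ≠ 0 := self_mem_nhdsWithin
      have h2 : ∀ᶠ v in nhdsWithin (0:ℝ) {(0:ℝ)}ᶜ, |v| < 1/2 := by
        apply eventually_nhdsWithin_of_eventually_nhds
        have := eventually_abs_sub_lt (0:ℝ) (by norm_num : (0:ℝ) < 1/2)
        simpa using this
      filter_upwards [h1, h2] with v hv hv2
      have key : ∀ w : ℝ, 0 < w → w ≤ 1/2 → |slope cothAux 0 w| ≤ w := by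
        intro w hw hw2
        have hs : 0 < Real.sinh w := Real.sinh_pos_iff.mpr hw
        have hD : 0 < w * Real.sinh w := by positivity
        have hkey := key_slope_bound hw hw2
        have hslope : slope cothAux 0 w
            = (w * Real.cosh w - Real.sinh w) / (w * Real.sinh w) := by
          rw [slope_def_field, cothAux, cothAux, if_neg hw.ne', if_pos rfl, sub_zero,
            div_sub_one hs.ne', div_div, mul_comm (Real.sinh w) w]
        rw [hslope, abs_of_nonneg (div_nonneg hkey.1 hD.le), div_le_iff₀ hD]
        exact hkey.2
      have hslope_even : ∀ w : ℝ, slope cothAux 0 (-w) = - slope cothAux 0 w := by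
        intro w
        rw [slope_def_field, slope_def_field, cothAux_even, sub_zero, sub_zero, div_neg]
      rcases lt_or_gt_of_ne hv with h | h
      · have hb := key (-v) (by linarith) (by rw [abs_of_neg h] at hv2; linarith)
        rw [hslope_even, abs_neg] at hb
        simpa [abs_of_neg h] using hb
      · have hb := key v h (by rw [abs_of_pos h] at hv2; linarith)
        simpa [abs_of_pos h] using hb
    · have h : Filter.Tendsto (fun v : ℝ => |v|) (nhds 0) (nhds 0) := by
        simpa using continuous_abs.tendsto (0:ℝ)
      exact h.mono_left nhdsWithin_le_nhds
  · have hs : Real.sinh u ≠ 0 := Real.sinh_ne_zero.mpr hu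
    have h1 : HasDerivAt (fun v => v * Real.cosh v / Real.sinh v)
        (((1 * Real.cosh u + u * Real.sinh u) * Real.sinh u
          - u * Real.cosh u * Real.cosh u) / (Real.sinh u) ^ 2) u :=
      (((hasDerivAt_id u).mul (Real.hasDerivAt_cosh u)).div (Real.hasDerivAt_sinh u) hs)
    have h2 : (((1 * Real.cosh u + u * Real.sinh u) * Real.sinh u
          - u * Real.cosh u * Real.cosh u) / (Real.sinh u) ^ 2) = cothAux' u := by
      rw [cothAux', if_neg hu]
      congr 1
      linear_combination (-u) * Real.cosh_sq_sub_sinh_sq u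
    rw [← h2]
    apply h1.congr_of_eventuallyEq
    filter_upwards [eventually_ne_nhds hu] with v hv
    rw [cothAux, if_neg hv]

lemma continuous_cothAux : Continuous cothAux :=
  continuous_iff_continuousAt.mpr fun u => (hasDerivAt_cothAux u).continuousAt

lemma integrand_eq (a b : ℝ) (ha : 0 < a) (hb : 0 < b) (x : ℝ) :
    Real.sinh x * harmLogMean (a * Real.exp (-x)) (b * Real.exp x)
      = (a - b) / 2 * cothAux ((Real.log a - Real.log b) / 2 - x)
        - (a + b) / 2 * ((Real.log a - Real.log b) / 2 - x) := by
  set m : ℝ := (Real.log a - Real.log b) / 2 with hm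
  set q : ℝ := b * Real.exp m with hq
  have hqpos : 0 < q := mul_pos hb (Real.exp_pos m)
  have hexp2m : Real.exp m * Real.exp m = a / b := by
    rw [← Real.exp_add, show m + m = Real.log a - Real.log b by rw [hm]; ring,
      Real.exp_sub, Real.exp_log ha, Real.exp_log hb]
  have hqa : q * Real.exp m = a := by
    rw [hq, mul_assoc, hexp2m]
    field_simp
  have hqb : q * Real.exp (-m) = b := by
    rw [hq, mul_assoc, ← Real.exp_add]; simp
  have hc1 : q * Real.cosh m = (a + b) / 2 := by
    rw [Real.cosh_eq]; linear_combination hqa / 2 + hqb / 2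
  have hc2 : q * Real.sinh m = (a - b) / 2 := by
    rw [Real.sinh_eq]; linear_combination hqa / 2 - hqb / 2
  by_cases hx : x = m
  · subst hx
    have hs : a * Real.exp (-m) = q := by
      rw [← hqa, mul_assoc, ← Real.exp_add]; simp
    have ht : b * Real.exp m = q := hq.symm
    rw [hs, ht]
    have hH : harmLogMean q q = q := by
      rw [harmLogMean, logMean, if_pos rfl]
      field_simp
    rw [hH]
    have h0 : cothAux 0 = 1 := by simp [cothAux]
    rw [sub_self, h0]
    linear_combination hc2
  · set u : ℝ := m - x with hu'
    have hu : u ≠ 0 := sub_ne_zero.mpr (fun h => hx h.symm)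
    have hsinhu : Real.sinh u ≠ 0 := Real.sinh_ne_zero.mpr hu
    have hs : a * Real.exp (-x) = q * Real.exp u := by
      rw [← hqa, mul_assoc, ← Real.exp_add, hu']; ring_nf
    have ht : b * Real.exp x = q * Real.exp (-u) := by
      rw [hq, mul_assoc, ← Real.exp_add, hu']; ring_nf
    have hne : q * Real.exp u ≠ q * Real.exp (-u) := by
      intro h
      have h2 := mul_left_cancel₀ hqpos.ne' h
      rw [Real.exp_eq_exp] at h2
      exact hu (by linarith)
    have hlog1 : Real.log (q * Real.exp u) = Real.log q + u := by
      rw [Real.log_mul hqpos.ne' (Real.exp_pos u).ne', Real.log_exp]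
    have hlog2 : Real.log (q * Real.exp (-u)) = Real.log q + -u := by
      rw [Real.log_mul hqpos.ne' (Real.exp_pos (-u)).ne', Real.log_exp]
    have hst : q * Real.exp u * (q * Real.exp (-u)) = q ^ 2 := by
      have h1 : Real.exp u * Real.exp (-u) = 1 := by rw [← Real.exp_add]; simp
      linear_combination q ^ 2 * h1
    have hsub : q * Real.exp u - q * Real.exp (-u) = 2 * q * Real.sinh u := by
      rw [Real.sinh_eq]; ring
    rw [hs, ht, harmLogMean, logMean, if_neg hne, hlog1, hlog2, hst, hsub]
    have hden : Real.log q + u - (Real.log q + -u) = 2 * u := by ring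
    rw [hden, cothAux, if_neg hu, ← hc1, ← hc2]
    have hxeq : x = m - u := by rw [hu']; ring
    rw [hxeq, Real.sinh_sub]
    field_simp

/-- For `a, b > 0` the map `ξ ↦ α*₁(a,b,ξ)` is convex on `ℝ`: it is twice
differentiable and its second derivative lies between `min{a,b}` and `max{a,b}`. -/
theorem alphaOne_convex_second_deriv_bounds (a b : ℝ) (ha : 0 < a) (hb : 0 < b) :
    ConvexOn ℝ Set.univ (fun ξ => alphaOne a b ξ) ∧
    ∃ f' f'' : ℝ → ℝ,
      (∀ ξ : ℝ, HasDerivAt (fun ξ' => alphaOne a b ξ') (f' ξ) ξ) ∧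
      (∀ ξ : ℝ, HasDerivAt f' (f'' ξ) ξ) ∧
      (∀ ξ : ℝ, min a b ≤ f'' ξ ∧ f'' ξ ≤ max a b) := by
  set m : ℝ := (Real.log a - Real.log b) / 2 with hm
  set g : ℝ → ℝ := fun x => (a - b) / 2 * cothAux (m - x) - (a + b) / 2 * (m - x) with hg
  set g' : ℝ → ℝ := fun x => (a + b) / 2 - (a - b) / 2 * cothAux' (m - x) with hg'
  have hgc : Continuous g := by
    apply Continuous.sub
    · exact continuous_const.mul (continuous_cothAux.comp (continuous_const.sub continuous_id))
    · exact continuous_const.mul (continuous_const.sub continuous_id)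
  have halpha : (fun ξ => alphaOne a b ξ) = fun ξ => ∫ x in (0:ℝ)..ξ, g x := by
    funext ξ
    exact intervalIntegral.integral_congr fun x _ => integrand_eq a b ha hb x
  have hF : ∀ ξ : ℝ, HasDerivAt (fun ξ' => alphaOne a b ξ') (g ξ) ξ := by
    intro ξ
    rw [halpha]
    exact (hgc.integral_hasStrictDerivAt 0 ξ).hasDerivAt
  have hG : ∀ ξ : ℝ, HasDerivAt g (g' ξ) ξ := by
    intro ξ
    have h1 : HasDerivAt (fun x : ℝ => m - x) (-1) ξ := by
      simpa using (hasDerivAt_id ξ).const_sub m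
    have h2 : HasDerivAt (fun x : ℝ => cothAux (m - x)) (cothAux' (m - ξ) * (-1)) ξ :=
      (hasDerivAt_cothAux (m - ξ)).comp ξ h1
    have h3 : HasDerivAt (fun x => (a - b) / 2 * cothAux (m - x) - (a + b) / 2 * (m - x))
        ((a - b) / 2 * (cothAux' (m - ξ) * -1) - (a + b) / 2 * -1) ξ := (h2.const_mul ((a - b) / 2)).sub (h1.const_mul ((a + b) / 2))
    convert h3 using 1
    show (a + b) / 2 - (a - b) / 2 * cothAux' (m - ξ) = _
    ring
  have hbounds : ∀ ξ : ℝ, min a b ≤ g' ξ ∧ g' ξ ≤ max a b := by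
    intro ξ
    have hB := abs_cothAux'_le_one (m - ξ)
    have habs : |(a - b) / 2 * cothAux' (m - ξ)| ≤ |(a - b) / 2| := by
      rw [abs_mul]
      exact mul_le_of_le_one_right (abs_nonneg _) hB
    have h2 := abs_le.mp habs
    rcases le_total a b with h | h
    · rw [min_eq_left h, max_eq_right h]
      rw [abs_of_nonpos (by linarith : (a - b) / 2 ≤ 0)] at h2
      constructor <;> simp only [hg'] <;> linarith [h2.1, h2.2]
    · rw [min_eq_right h, max_eq_left h]
      rw [abs_of_nonneg (by linarith : 0 ≤ (a - b) / 2)] at h2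
      constructor <;> simp only [hg'] <;> linarith [h2.1, h2.2]
  have hmin_pos : 0 < min a b := lt_min ha hb
  have hconv : ConvexOn ℝ Set.univ (fun ξ => alphaOne a b ξ) := by
    have hdiff : Differentiable ℝ (fun ξ => alphaOne a b ξ) :=
      fun ξ => (hF ξ).differentiableAt
    apply Monotone.convexOn_univ_of_deriv hdiff
    have hderiv : deriv (fun ξ => alphaOne a b ξ) = g := funext fun ξ => (hF ξ).deriv
    rw [hderiv]
    apply monotone_of_deriv_nonneg (fun ξ => (hG ξ).differentiableAt)
    intro ξ
    rw [(hG ξ).deriv]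
    linarith [(hbounds ξ).1]
  exact ⟨hconv, g, g', hF, hG, hbounds⟩
end

section
/- For all a, b > 0 and ξ ∈ ℝ, as ε → 0⁺ one has α*_ε(a,b,ξ) → (1/2)·(a·(ξ⁺)² + b·(ξ⁻)²), where ξ⁺ = max{ξ, 0} and ξ⁻ = max{-ξ, 0}. -/
open Real Filter Topology

/-- `α*_ε(a,b,ξ) = ε ∫₀^ξ sinh(x/ε) Λ_H(a e^{-x/ε}, b e^{x/ε}) dx`. -/
noncomputable def alphaEps (ε a b ξ : ℝ) : ℝ :=
  ε * ∫ x in (0:ℝ)..ξ,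
    Real.sinh (x / ε) * harmLogMean (a * Real.exp (-x / ε)) (b * Real.exp (x / ε))

noncomputable def Gfun (v : ℝ) : ℝ := if v = 0 then 1 else v * Real.cosh v / Real.sinh v

lemma Gfun_neg (v : ℝ) : Gfun (-v) = Gfun v := by
  unfold Gfun
  rcases eq_or_ne v 0 with h | h
  · simp [h]
  · rw [if_neg (neg_ne_zero.mpr h), if_neg h, Real.cosh_neg, Real.sinh_neg]
    field_simp

lemma Gfun_abs_le (v : ℝ) : |Gfun v| ≤ 1 + |v| := by
  have key : ∀ w : ℝ, 0 < w → |Gfun w| ≤ 1 + |w| := by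
    intro w hw
    have hs : 0 < Real.sinh w := Real.sinh_pos_iff.mpr hw
    have hc : 0 < Real.cosh w := Real.cosh_pos w
    rw [Gfun, if_neg hw.ne']
    have hnn : 0 ≤ w * Real.cosh w / Real.sinh w := by positivity
    rw [abs_of_nonneg hnn, abs_of_pos hw, div_le_iff₀ hs]
    -- w cosh w ≤ (1+w) sinh w
    have h1 : Real.sinh w = (Real.exp w - Real.exp (-w)) / 2 := Real.sinh_eq w
    have h2 : Real.cosh w = (Real.exp w + Real.exp (-w)) / 2 := Real.cosh_eq w
    have h3 : 1 + 2 * w ≤ Real.exp (2 * w) := by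
      have := Real.add_one_le_exp (2 * w); linarith
    have h4 : Real.exp (2 * w) = Real.exp w * Real.exp w := by
      rw [← Real.exp_add]; ring_nf
    have h5 : Real.exp w * Real.exp (-w) = 1 := by
      rw [← Real.exp_add]; simp
    have h6 : 0 < Real.exp (-w) := Real.exp_pos _
    nlinarith [Real.exp_pos w]
  rcases lt_trichotomy v 0 with h | h | h
  · rw [← Gfun_neg, ← abs_neg v]; exact key (-v) (by linarith)
  · simp [h, Gfun]
  · exact key v h

lemma key_identity {a b : ℝ} (ha : 0 < a) (hb : 0 < b) (u : ℝ) :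
    Real.sinh u * harmLogMean (a * Real.exp (-u)) (b * Real.exp u)
      = ((a + b) / 2) * (u - (Real.log a - Real.log b) / 2)
        + ((a - b) / 2) * Gfun (u - (Real.log a - Real.log b) / 2) := by
  set m : ℝ := (Real.log a - Real.log b) / 2 with hm
  set c : ℝ := Real.exp ((Real.log a + Real.log b) / 2) with hc
  have hc0 : 0 < c := Real.exp_pos _
  have hca : c * Real.exp m = a := by
    rw [hc, hm, ← Real.exp_add]
    rw [show (Real.log a + Real.log b) / 2 + (Real.log a - Real.log b) / 2 = Real.log a by ring]
    exact Real.exp_log ha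
  have hcb : c * Real.exp (-m) = b := by
    rw [hc, hm, ← Real.exp_add]
    rw [show (Real.log a + Real.log b) / 2 + -((Real.log a - Real.log b) / 2) = Real.log b by ring]
    exact Real.exp_log hb
  have hcosh : c * Real.cosh m = (a + b) / 2 := by
    rw [Real.cosh_eq]; rw [← hca, ← hcb]; ring
  have hsinh : c * Real.sinh m = (a - b) / 2 := by
    rw [Real.sinh_eq]; rw [← hca, ← hcb]; ring
  set v : ℝ := u - m with hv
  have hs : a * Real.exp (-u) = c * Real.exp (-v) := by
    rw [← hca, mul_assoc, ← Real.exp_add, hv]; ring_nf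
  have ht : b * Real.exp u = c * Real.exp v := by
    rw [← hcb, mul_assoc, ← Real.exp_add, hv]; ring_nf
  rw [hs, ht]
  have hu : u = v + m := by rw [hv]; ring
  rcases eq_or_ne v 0 with h0 | h0
  · rw [h0]
    simp only [neg_zero, Real.exp_zero, mul_one, Gfun, if_pos rfl]
    rw [harmLogMean, logMean, if_pos rfl]
    rw [hu, h0, zero_add]
    simp only [if_true]
    field_simp
    nlinarith [hsinh]
  · have hsv : Real.sinh v ≠ 0 := Real.sinh_ne_zero.mpr h0
    have hne : c * Real.exp (-v) ≠ c * Real.exp v := by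
      intro h
      have h2 : Real.exp (-v) = Real.exp v := mul_left_cancel₀ hc0.ne' h
      have h3 : -v = v := Real.exp_injective h2
      exact h0 (by linarith)
    have hlog1 : Real.log (c * Real.exp (-v)) = (Real.log c) + (-v) := by
      rw [Real.log_mul hc0.ne' (Real.exp_pos _).ne', Real.log_exp (-v)]
    have hlog2 : Real.log (c * Real.exp v) = (Real.log c) + v := by
      rw [Real.log_mul hc0.ne' (Real.exp_pos _).ne', Real.log_exp v]
    have hdiff : c * Real.exp (-v) - c * Real.exp v = -(2 * (c * Real.sinh v)) := by
      rw [Real.sinh_eq]; ring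
    rw [harmLogMean, logMean, if_neg hne, hlog1, hlog2, hdiff]
    rw [show Real.log c + -v - (Real.log c + v) = -(2*v) by ring]
    have hGf : Gfun v = v * Real.cosh v / Real.sinh v := by rw [Gfun, if_neg h0]
    have hsu : Real.sinh u = Real.sinh v * Real.cosh m + Real.cosh v * Real.sinh m := by
      rw [hu, Real.sinh_add]
    have he1 : Real.exp (-v) * Real.exp v = 1 := by
      rw [← Real.exp_add]; norm_num
    have hst : (c * Real.exp (-v)) * (c * Real.exp v) = c * c := by
      rw [show (c * Real.exp (-v)) * (c * Real.exp v) = c * c * (Real.exp (-v) * Real.exp v) by ring,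
        he1, mul_one]
    rw [hsu, hGf, hst, ← hcosh, ← hsinh]
    field_simp

lemma tendsto_coth_atTop : Tendsto (fun w : ℝ => Real.cosh w / Real.sinh w) atTop (𝓝 1) := by
  have h : Tendsto (fun w : ℝ => Real.exp (-(2 * w))) atTop (𝓝 0) := by
    apply Real.tendsto_exp_atBot.comp
    exact tendsto_neg_atBot_iff.mpr ((tendsto_const_mul_atTop_of_pos two_pos).mpr tendsto_id)
  have h2 : Tendsto (fun w : ℝ => (1 + Real.exp (-(2 * w))) / (1 - Real.exp (-(2 * w))))
      atTop (𝓝 1) := by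
    have ha : Tendsto (fun w : ℝ => 1 + Real.exp (-(2 * w))) atTop (𝓝 (1 + 0)) :=
      tendsto_const_nhds.add h
    have hb : Tendsto (fun w : ℝ => 1 - Real.exp (-(2 * w))) atTop (𝓝 (1 - 0)) :=
      tendsto_const_nhds.sub h
    simpa [Pi.div_def] using ha.div hb (by norm_num)
  apply h2.congr'
  filter_upwards [eventually_gt_atTop (0:ℝ)] with w hw
  have hs : 0 < Real.sinh w := Real.sinh_pos_iff.mpr hw
  have hE : Real.exp (-(2 * w)) = Real.exp (-w) * Real.exp (-w) := by
    rw [← Real.exp_add]; ring_nf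
  have he1 : Real.exp (-w) * Real.exp w = 1 := by rw [← Real.exp_add]; norm_num
  have hlt : Real.exp (-w) * Real.exp (-w) < 1 := by
    nlinarith [Real.exp_lt_exp.mpr (show -w < w by linarith), Real.exp_pos (-w)]
  rw [Real.cosh_eq, Real.sinh_eq, hE]
  rw [div_eq_div_iff (by linarith) (by
    have := Real.sinh_eq w; nlinarith [hs])]
  linear_combination (Real.exp (-w)) * he1

lemma tendsto_coth_atBot : Tendsto (fun w : ℝ => Real.cosh w / Real.sinh w) atBot (𝓝 (-1)) := by
  have h := tendsto_coth_atTop.comp tendsto_neg_atBot_atTop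
  have h2 : (fun w : ℝ => Real.cosh (-w) / Real.sinh (-w))
      = fun w : ℝ => -(Real.cosh w / Real.sinh w) := by
    funext w; rw [Real.cosh_neg, Real.sinh_neg, div_neg]
  rw [show (fun w : ℝ => Real.cosh w / Real.sinh w) ∘ Neg.neg
      = fun w : ℝ => -(Real.cosh w / Real.sinh w) from h2 ▸ rfl] at h
  simpa using h.neg

lemma tendsto_eps_Gfun (m : ℝ) {x : ℝ} (hx : x ≠ 0) :
    Tendsto (fun ε : ℝ => ε * Gfun (x / ε - m)) (𝓝[>] 0) (𝓝 |x|) := by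
  have hx' : Tendsto (fun ε : ℝ => x - ε * m) (𝓝[>] 0) (𝓝 x) := by
    have : Tendsto (fun ε : ℝ => ε) (𝓝[>] 0) (𝓝 0) := tendsto_id.mono_left nhdsWithin_le_nhds
    simpa using (tendsto_const_nhds.sub (this.mul_const m))
  rcases hx.lt_or_gt with hneg | hpos
  · -- x < 0, v → atBot
    have hv : Tendsto (fun ε : ℝ => x / ε - m) (𝓝[>] 0) atBot := by
      apply tendsto_atBot_add_const_right
      have : Tendsto (fun ε : ℝ => x * ε⁻¹) (𝓝[>] 0) atBot :=
        (tendsto_const_mul_atBot_of_neg hneg).mpr tendsto_inv_nhdsGT_zero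
      exact this.congr (fun ε => (div_eq_mul_inv x ε).symm)
    have hlim : Tendsto (fun ε : ℝ => (x - ε * m) * (Real.cosh (x / ε - m) / Real.sinh (x / ε - m)))
        (𝓝[>] 0) (𝓝 |x|) := by
      have := hx'.mul (tendsto_coth_atBot.comp hv)
      simpa [abs_of_neg hneg] using this
    apply hlim.congr'
    filter_upwards [hv.eventually (eventually_lt_atBot (0:ℝ)), self_mem_nhdsWithin] with ε hv0 hε
    have hε0 : (ε:ℝ) ≠ 0 := ne_of_gt (Set.mem_Ioi.mp hε)
    rw [Gfun, if_neg (ne_of_lt hv0)]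
    have h2 : ε * (x / ε - m) = x - ε * m := by field_simp
    calc (x - ε * m) * (Real.cosh (x / ε - m) / Real.sinh (x / ε - m))
        = (ε * (x / ε - m)) * (Real.cosh (x / ε - m) / Real.sinh (x / ε - m)) := by rw [h2]
      _ = ε * ((x / ε - m) * Real.cosh (x / ε - m) / Real.sinh (x / ε - m)) := by ring
  · -- x > 0, v → atTop
    have hv : Tendsto (fun ε : ℝ => x / ε - m) (𝓝[>] 0) atTop := by
      apply tendsto_atTop_add_const_right
      have : Tendsto (fun ε : ℝ => x * ε⁻¹) (𝓝[>] 0) atTop :=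
        (tendsto_const_mul_atTop_of_pos hpos).mpr tendsto_inv_nhdsGT_zero
      exact this.congr (fun ε => (div_eq_mul_inv x ε).symm)
    have hlim : Tendsto (fun ε : ℝ => (x - ε * m) * (Real.cosh (x / ε - m) / Real.sinh (x / ε - m)))
        (𝓝[>] 0) (𝓝 |x|) := by
      have := hx'.mul (tendsto_coth_atTop.comp hv)
      simpa [abs_of_pos hpos] using this
    apply hlim.congr'
    filter_upwards [hv.eventually (eventually_gt_atTop (0:ℝ)), self_mem_nhdsWithin] with ε hv0 hε
    have hε0 : (ε:ℝ) ≠ 0 := ne_of_gt (Set.mem_Ioi.mp hε)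
    rw [Gfun, if_neg (ne_of_gt hv0)]
    have h2 : ε * (x / ε - m) = x - ε * m := by field_simp
    calc (x - ε * m) * (Real.cosh (x / ε - m) / Real.sinh (x / ε - m))
        = (ε * (x / ε - m)) * (Real.cosh (x / ε - m) / Real.sinh (x / ε - m)) := by rw [h2]
      _ = ε * ((x / ε - m) * Real.cosh (x / ε - m) / Real.sinh (x / ε - m)) := by ring

lemma measurable_Gfun : Measurable Gfun := by
  unfold Gfun
  have hms : MeasurableSet {v : ℝ | v = 0} := by
    simpa [Set.setOf_eq_eq_singleton] using measurableSet_singleton (0:ℝ)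
  exact Measurable.ite hms
    measurable_const ((measurable_id.mul Real.measurable_cosh).div Real.measurable_sinh)

lemma integral_abs_id (ξ : ℝ) : (∫ x in (0:ℝ)..ξ, |x|) = ξ * |ξ| / 2 := by
  rcases le_or_gt 0 ξ with h | h
  · rw [abs_of_nonneg h]
    rw [intervalIntegral.integral_congr (g := fun x : ℝ => x) ?_, integral_id]
    · ring
    · intro x hx
      rw [Set.uIcc_of_le h] at hx
      exact abs_of_nonneg hx.1
  · rw [abs_of_neg h]
    rw [intervalIntegral.integral_congr (g := fun x : ℝ => -x) ?_]
    · rw [intervalIntegral.integral_neg, integral_id]; ring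
    · intro x hx
      rw [Set.uIcc_of_ge h.le] at hx
      exact abs_of_nonpos hx.2

lemma integral_limit_fun (a b ξ : ℝ) :
    (∫ x in (0:ℝ)..ξ, (((a + b) / 2) * x + ((a - b) / 2) * |x|))
      = (1 / 2) * (a * max ξ 0 ^ 2 + b * max (-ξ) 0 ^ 2) := by
  have h1 : IntervalIntegrable (fun x : ℝ => ((a + b) / 2) * x) MeasureTheory.volume 0 ξ :=
    (continuous_const.mul continuous_id).intervalIntegrable _ _
  have h2 : IntervalIntegrable (fun x : ℝ => ((a - b) / 2) * |x|) MeasureTheory.volume 0 ξ :=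
    (continuous_const.mul continuous_abs).intervalIntegrable _ _
  rw [intervalIntegral.integral_add h1 h2, intervalIntegral.integral_const_mul,
    intervalIntegral.integral_const_mul, integral_id, integral_abs_id]
  rcases le_or_gt 0 ξ with h | h
  · rw [abs_of_nonneg h, max_eq_left h, max_eq_right (neg_nonpos.mpr h)]
    ring
  · rw [abs_of_neg h, max_eq_right h.le, max_eq_left (neg_nonneg.mpr h.le)]
    ring

/-- As `ε → 0⁺`, `α*_ε(a,b,ξ) → (a (ξ⁺)² + b (ξ⁻)²)/2`. -/
theorem alphaEps_tendsto_upwind (a b ξ : ℝ) (ha : 0 < a) (hb : 0 < b) :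
    Tendsto (fun ε : ℝ => alphaEps ε a b ξ) (nhdsWithin 0 (Set.Ioi 0))
      (nhds ((1 / 2) * (a * max ξ 0 ^ 2 + b * max (-ξ) 0 ^ 2))) := by
  set m : ℝ := (Real.log a - Real.log b) / 2 with hm
  set F : ℝ → ℝ → ℝ := fun ε x =>
    ((a + b) / 2) * (x - ε * m) + ((a - b) / 2) * (ε * Gfun (x / ε - m)) with hF
  set f : ℝ → ℝ := fun x => ((a + b) / 2) * x + ((a - b) / 2) * |x| with hf
  set C : ℝ := ((a + b) / 2) * (|ξ| + |m|) + (|a - b| / 2) * (1 + |ξ| + |m|) with hC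
  have habs : ∀ x ∈ Set.uIoc (0:ℝ) ξ, |x| ≤ |ξ| := by
    intro x hx
    rcases hx with ⟨h1, h2⟩
    rw [abs_le]
    rcases le_total 0 ξ with hs | hs
    · rw [min_eq_left hs] at h1; rw [max_eq_right hs] at h2
      rw [abs_of_nonneg hs]
      exact ⟨by linarith, h2⟩
    · rw [min_eq_right hs] at h1; rw [max_eq_left hs] at h2
      rw [abs_of_nonpos hs]
      exact ⟨by linarith, by linarith⟩
  have hmain : Tendsto (fun ε : ℝ => ∫ x in (0:ℝ)..ξ, F ε x) (𝓝[>] 0)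
      (𝓝 (∫ x in (0:ℝ)..ξ, f x)) := by
    apply intervalIntegral.tendsto_integral_filter_of_dominated_convergence (bound := fun _ => C)
    · -- measurability
      filter_upwards [self_mem_nhdsWithin] with ε hε
      apply Measurable.aestronglyMeasurable
      apply Measurable.add
      · exact (measurable_id.sub_const (ε * m)).const_mul _
      · exact ((measurable_Gfun.comp ((measurable_id.div_const ε).sub_const m)).const_mul ε).const_mul _
    · -- bound
      have hmem : Set.Ioc (0:ℝ) 1 ∈ 𝓝[>] (0:ℝ) :=
        Ioc_mem_nhdsGT_of_mem (by norm_num : (0:ℝ) ∈ Set.Ico (0:ℝ) 1)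
      filter_upwards [hmem] with ε hε
      apply MeasureTheory.ae_of_all
      intro x hx
      have hxb := habs x hx
      have hε0 : 0 < ε := hε.1
      have hε1 : ε ≤ 1 := hε.2
      rw [Real.norm_eq_abs, hF]
      have t1 : |((a + b) / 2) * (x - ε * m)| ≤ ((a + b) / 2) * (|ξ| + |m|) := by
        rw [abs_mul, abs_of_nonneg (by linarith : (0:ℝ) ≤ (a + b) / 2)]
        apply mul_le_mul_of_nonneg_left _ (by linarith : (0:ℝ) ≤ (a + b) / 2)
        calc |x - ε * m| ≤ |x| + |ε * m| := abs_sub x (ε * m)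
          _ ≤ |ξ| + |m| := by
            rw [abs_mul, abs_of_pos hε0]
            have : ε * |m| ≤ 1 * |m| := by
              apply mul_le_mul_of_nonneg_right hε1 (abs_nonneg m)
            nlinarith [abs_nonneg m]
      have t2 : |((a - b) / 2) * (ε * Gfun (x / ε - m))| ≤ (|a - b| / 2) * (1 + |ξ| + |m|) := by
        rw [abs_mul]
        rw [show |(a - b) / 2| = |a - b| / 2 by rw [abs_div]; norm_num]
        apply mul_le_mul_of_nonneg_left _ (by positivity)
        rw [abs_mul, abs_of_pos hε0]
        calc ε * |Gfun (x / ε - m)| ≤ ε * (1 + |x / ε - m|) := by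
              apply mul_le_mul_of_nonneg_left (Gfun_abs_le _) hε0.le
          _ ≤ ε + (|x| + ε * |m|) := by
              have : |x / ε - m| ≤ |x / ε| + |m| := abs_sub (x / ε) m
              have h2 : ε * |x / ε| = |x| := by
                rw [abs_div, abs_of_pos hε0]; field_simp
              nlinarith [abs_nonneg (x / ε), abs_nonneg m]
          _ ≤ 1 + |ξ| + |m| := by
              have : ε * |m| ≤ 1 * |m| := mul_le_mul_of_nonneg_right hε1 (abs_nonneg m)
              nlinarith [abs_nonneg m]
      calc |((a + b) / 2) * (x - ε * m) + ((a - b) / 2) * (ε * Gfun (x / ε - m))|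
          ≤ |((a + b) / 2) * (x - ε * m)| + |((a - b) / 2) * (ε * Gfun (x / ε - m))| := abs_add_le _ _
        _ ≤ C := by rw [hC]; linarith
    · exact intervalIntegrable_const
    · -- pointwise limit
      have h0 : ∀ᵐ x : ℝ, x ≠ 0 := by
        rw [MeasureTheory.ae_iff]
        simpa [Set.setOf_eq_eq_singleton] using MeasureTheory.measure_singleton (0:ℝ)
      filter_upwards [h0] with x hx _
      have hG := tendsto_eps_Gfun m hx
      have hx' : Tendsto (fun ε : ℝ => x - ε * m) (𝓝[>] 0) (𝓝 x) := by
        have : Tendsto (fun ε : ℝ => ε) (𝓝[>] 0) (𝓝 0) := tendsto_id.mono_left nhdsWithin_le_nhds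
        simpa using (tendsto_const_nhds.sub (this.mul_const m))
      have := (hx'.const_mul ((a + b) / 2)).add (hG.const_mul ((a - b) / 2))
      simpa [hF, hf] using this
  have heq : ∀ᶠ ε in 𝓝[>] (0:ℝ), (fun ε : ℝ => ∫ x in (0:ℝ)..ξ, F ε x) ε
      = (fun ε : ℝ => alphaEps ε a b ξ) ε := by
    filter_upwards [self_mem_nhdsWithin] with ε hε
    have hε0 : (ε:ℝ) ≠ 0 := ne_of_gt hε
    simp only [alphaEps]
    rw [← intervalIntegral.integral_const_mul]
    apply intervalIntegral.integral_congr
    intro x _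
    simp only [hF, neg_div]
    rw [key_identity ha hb (x / ε), ← hm]
    have h2 : x / ε = x * ε⁻¹ := div_eq_mul_inv x ε
    have h3 : ε * ε⁻¹ = 1 := mul_inv_cancel₀ hε0
    rw [h2]
    linear_combination (-((a + b) / 2 * x)) * h3
  have hfin := hmain.congr' heq
  rwa [integral_limit_fun a b ξ] at hfin
end
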